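/- If an infinite word w over an alphabet A is c-balanced, then for every pair of distinct letters i, j in A, the binary projection π_{i,j}(w) is c-balanced. -/

import Mathlib

/-- `u` is a factor (finite contiguous subword) of the infinite word `w`. -/
def Factor {α : Type*} (w : ℕ → α) (u : List α) : Prop :=
  ∃ s : ℕ, u = (List.range u.length).map (fun t => w (s + t))

/-- `u` is a factor of the projection of the infinite word `w` onto `{i, j}`:
factors of the projection are exactly the projections of factors of `w`. -/
def FactorProj {α : Type*} [DecidableEq α] (w : ℕ → α) (i j : α) (u : List α) : Prop :=
  ∃ s n : ℕ,
    u = ((List.range n).map (fun t => w (s + t))).filter (fun c => decide (c = i ∨ c = j))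

/-- The window of `w` of length `n` starting at `s`. -/
def Win {α : Type*} (w : ℕ → α) (s n : ℕ) : List α :=
  (List.range n).map (fun t => w (s + t))

/-- The projected window. -/
def PWin {α : Type*} [DecidableEq α] (w : ℕ → α) (i j : α) (s n : ℕ) : List α :=
  (Win w s n).filter (fun c => decide (c = i ∨ c = j))

lemma win_length {α : Type*} (w : ℕ → α) (s n : ℕ) : (Win w s n).length = n := by
  simp [Win]

lemma win_factor {α : Type*} (w : ℕ → α) (s n : ℕ) : Factor w (Win w s n) := by
  refine ⟨s, ?_⟩
  rw [win_length]
  rfl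

lemma win_prefix {α : Type*} (w : ℕ → α) (s : ℕ) {n n' : ℕ} (hn : n ≤ n') :
    Win w s n <+: Win w s n' := by
  have : Win w s n = (Win w s n').take n := by
    unfold Win
    rw [← List.map_take, List.take_range]
    simp [Nat.min_eq_left hn]
  rw [this]
  exact List.take_prefix n _

lemma pwin_swap {α : Type*} [DecidableEq α] (w : ℕ → α) (i j : α) (s n : ℕ) :
    PWin w i j s n = PWin w j i s n := by
  unfold PWin
  apply List.filter_congr
  intro x _
  simp [or_comm]

lemma pwin_count_eq {α : Type*} [DecidableEq α] (w : ℕ → α) (i j : α) (s n : ℕ) :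
    (PWin w i j s n).count i = (Win w s n).count i := by
  apply List.count_filter
  simp

lemma pwin_len_eq {α : Type*} [DecidableEq α] {i j : α} (hij : i ≠ j)
    (l : List α) (hl : ∀ x ∈ l, x = i ∨ x = j) :
    l.length = l.count i + l.count j := by
  induction l with
  | nil => simp
  | cons a l ih =>
    have ha := hl a List.mem_cons_self
    have ih' := ih (fun x hx => hl x (List.mem_cons_of_mem a hx))
    rcases ha with rfl | rfl
    · simp [List.count_cons, ih', hij, hij.symm]
      omega
    · simp [List.count_cons, ih', hij, hij.symm]
      omega

lemma pwin_mem {α : Type*} [DecidableEq α] {w : ℕ → α} {i j : α} {s n : ℕ}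
    {x : α} (hx : x ∈ PWin w i j s n) : x = i ∨ x = j := by
  have := (List.mem_filter.mp hx).2
  exact of_decide_eq_true this

/-- One-sided bound for the letter `i`, when the first window is the shorter one. -/
lemma one_sided_short {α : Type*} [DecidableEq α] (w : ℕ → α) (c : ℕ)
    (h : ∀ u v : List α, Factor w u → Factor w v → u.length = v.length →
      ∀ a : α, |(u.count a : ℤ) - (v.count a : ℤ)| ≤ c)
    (i j : α) (s n s' n' : ℕ) (hn : n ≤ n') :
    ((PWin w i j s n).count i : ℤ) - ((PWin w i j s' n').count i : ℤ) ≤ c := by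
  have h1 : (PWin w i j s n).count i ≤ (Win w s n').count i := by
    rw [pwin_count_eq]
    exact ((win_prefix w s hn).sublist).count_le i
  have h2 : (PWin w i j s' n').count i = (Win w s' n').count i := pwin_count_eq ..
  have h3 := h (Win w s n') (Win w s' n') (win_factor w s n') (win_factor w s' n')
    (by rw [win_length, win_length]) i
  rw [abs_sub_le_iff] at h3
  have := h3.1
  push_cast at *
  omega

/-- One-sided bound for the letter `i`, general. -/
lemma one_sided {α : Type*} [DecidableEq α] (w : ℕ → α) (c : ℕ)
    (h : ∀ u v : List α, Factor w u → Factor w v → u.length = v.length →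
      ∀ a : α, |(u.count a : ℤ) - (v.count a : ℤ)| ≤ c)
    (i j : α) (hij : i ≠ j) (s n s' n' : ℕ)
    (hlen : (PWin w i j s n).length = (PWin w i j s' n').length) :
    ((PWin w i j s n).count i : ℤ) - ((PWin w i j s' n').count i : ℤ) ≤ c := by
  rcases le_total n n' with hn | hn
  · exact one_sided_short w c h i j s n s' n' hn
  · -- use the other letter j, on the swapped pair of windows
    have hj : ((PWin w i j s' n').count j : ℤ) - ((PWin w i j s n).count j : ℤ) ≤ c := by
      rw [pwin_swap w i j s' n', pwin_swap w i j s n]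
      exact one_sided_short w c h j i s' n' s n hn
    have l1 := pwin_len_eq hij (PWin w i j s n) (fun x hx => pwin_mem hx)
    have l2 := pwin_len_eq hij (PWin w i j s' n') (fun x hx => pwin_mem hx)
    push_cast at *
    omega

theorem stmt_12 {α : Type*} [DecidableEq α] (w : ℕ → α) (c : ℕ)
    (h : ∀ u v : List α, Factor w u → Factor w v → u.length = v.length →
      ∀ a : α, |(u.count a : ℤ) - (v.count a : ℤ)| ≤ c) :
    ∀ i j : α, i ≠ j → ∀ u v : List α,
      FactorProj w i j u → FactorProj w i j v → u.length = v.length →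
      ∀ a : α, |(u.count a : ℤ) - (v.count a : ℤ)| ≤ c := by
  intro i j hij u v hu hv hlen a
  obtain ⟨s, n, rfl⟩ := hu
  obtain ⟨s', n', rfl⟩ := hv
  have hu' : ((List.range n).map (fun t => w (s + t))).filter
      (fun c => decide (c = i ∨ c = j)) = PWin w i j s n := rfl
  have hv' : ((List.range n').map (fun t => w (s' + t))).filter
      (fun c => decide (c = i ∨ c = j)) = PWin w i j s' n' := rfl
  rw [hu', hv'] at hlen ⊢
  by_cases hai : a = i
  · subst hai
    rw [abs_sub_le_iff]
    exact ⟨one_sided w c h a j hij s n s' n' hlen,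
      one_sided w c h a j hij s' n' s n hlen.symm⟩
  by_cases haj : a = j
  · subst haj
    rw [pwin_swap w i a s n, pwin_swap w i a s' n'] at hlen ⊢
    rw [abs_sub_le_iff]
    exact ⟨one_sided w c h a i (Ne.symm hij) s n s' n' hlen,
      one_sided w c h a i (Ne.symm hij) s' n' s n hlen.symm⟩
  · have z1 : (PWin w i j s n).count a = 0 := by
      rw [List.count_eq_zero]
      intro hmem
      rcases pwin_mem hmem with rfl | rfl <;> simp_all
    have z2 : (PWin w i j s' n').count a = 0 := by
      rw [List.count_eq_zero]
      intro hmem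
      rcases pwin_mem hmem with rfl | rfl <;> simp_all
    simp [z1, z2]
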